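/- Let T be a tournament and R = {a,b,c} a 3-element subset of its vertices. Then R is a minimal τ-retentive set of T if and only if (1) a, b, c form a directed triangle (each dominates exactly one of the other two), and (2) no vertex of T dominates two vertices of R. -/

import Mathlib

variable {V : Type}

/-- Inneighbors of `v` inside the subtournament on `s` (excluding `v` itself). -/
def inn [DecidableEq V] (r : V → V → Prop) [DecidableRel r] (s : Finset V) (v : V) :
    Finset V :=
  (s.filter fun u => r u v).erase v

lemma inn_card_lt [DecidableEq V] (r : V → V → Prop) [DecidableRel r]
    (s : Finset V) (v : V) (hv : v ∈ s) : (inn r s v).card < s.card := by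
  have h1 : inn r s v ⊆ s.erase v := by
    intro x hx
    rcases Finset.mem_erase.mp hx with ⟨hxv, hx2⟩
    exact Finset.mem_erase.mpr ⟨hxv, (Finset.mem_filter.mp hx2).1⟩
  calc (inn r s v).card ≤ (s.erase v).card := Finset.card_le_card h1
    _ < s.card := Finset.card_erase_lt_of_mem hv

/-- The tournament equilibrium set of the subtournament of `r` on `s`:
the union of all minimal τ-retentive sets. -/
def tau [DecidableEq V] (r : V → V → Prop) [DecidableRel r] (s : Finset V) : Set V :=
  {x | ∃ A : Finset V, x ∈ A ∧ A ⊆ s ∧ A.Nonempty ∧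
    (∀ v, v ∈ s → v ∈ A → ((inn r s v).Nonempty → tau r (inn r s v) ⊆ ↑A)) ∧
    ∀ B : Finset V, B ⊆ s → B ⊂ A →
      ¬ (B.Nonempty ∧
        ∀ v, v ∈ s → v ∈ B → ((inn r s v).Nonempty → tau r (inn r s v) ⊆ ↑B))}
termination_by s.card
decreasing_by
  all_goals exact inn_card_lt r s v (by assumption)

/-- `A` is a τ-retentive set of the tournament on `s`. -/
def Retentive [DecidableEq V] (r : V → V → Prop) [DecidableRel r] (s A : Finset V) : Prop :=
  A ⊆ s ∧ A.Nonempty ∧ ∀ v ∈ A, (inn r s v).Nonempty → tau r (inn r s v) ⊆ ↑A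

/-- `A` is a minimal τ-retentive set of the tournament on `s`. -/
def MinRetentive [DecidableEq V] (r : V → V → Prop) [DecidableRel r] (s A : Finset V) : Prop :=
  Retentive r s A ∧ ∀ B, Retentive r s B → B ⊆ A → B = A

/-- `r` is a tournament on the vertex set `s`. -/
def IsTournament (r : V → V → Prop) (s : Finset V) : Prop :=
  (∀ v ∈ s, ¬ r v v) ∧ ∀ u ∈ s, ∀ v ∈ s, u ≠ v → (r u v ↔ ¬ r v u)

/-- `u` is the captain of `v` in the subtournament on `s`:
`u` dominates `v` and all other inneighbors of `v`. -/
def IsCaptain (r : V → V → Prop) (s : Finset V) (u v : V) : Prop :=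
  u ∈ s ∧ v ∈ s ∧ r u v ∧ ∀ w ∈ s, w ≠ u → r w v → r u w

/-- The (undirected) domination graph of the subtournament on `s`. -/
def domGraph (r : V → V → Prop) (s : Finset V) : SimpleGraph V where
  Adj u v := (IsCaptain r s u v ∨ IsCaptain r s v u) ∧ u ≠ v
  symm := by
    constructor
    intro u v h
    exact ⟨h.1.symm, h.2.symm⟩
  loopless := by
    constructor
    intro u h
    exact h.2 rfl


def RetLike [DecidableEq V] (r : V → V → Prop) [DecidableRel r] (s A : Finset V) : Prop :=
  ∀ v, v ∈ s → v ∈ A → ((inn r s v).Nonempty → tau r (inn r s v) ⊆ ↑A)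

lemma mem_tau [DecidableEq V] (r : V → V → Prop) [DecidableRel r] {s : Finset V} {x : V} :
    x ∈ tau r s ↔ ∃ A : Finset V, x ∈ A ∧ A ⊆ s ∧ A.Nonempty ∧
      RetLike r s A ∧
      ∀ B : Finset V, B ⊆ s → B ⊂ A → ¬ (B.Nonempty ∧ RetLike r s B) := by
  rw [tau]; rfl

section Aux
variable [DecidableEq V] (r : V → V → Prop) [DecidableRel r]

lemma inn_subset (s : Finset V) (v : V) : inn r s v ⊆ s := by
  intro x hx
  exact (Finset.mem_filter.mp (Finset.mem_of_mem_erase hx)).1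

lemma mem_inn {s : Finset V} {u v : V} :
    u ∈ inn r s v ↔ u ≠ v ∧ u ∈ s ∧ r u v := by
  simp [inn, Finset.mem_erase, Finset.mem_filter, and_assoc]

lemma tau_subset (s : Finset V) : tau r s ⊆ ↑s := by
  intro x hx
  obtain ⟨A, hxA, hAs, -⟩ := (mem_tau r).mp hx
  exact hAs hxA

lemma exists_min (s : Finset V) : ∀ A : Finset V, A ⊆ s → A.Nonempty → RetLike r s A →
    ∃ A', A' ⊆ A ∧ A'.Nonempty ∧ RetLike r s A' ∧
      ∀ B : Finset V, B ⊆ s → B ⊂ A' → ¬ (B.Nonempty ∧ RetLike r s B) := by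
  intro A
  induction A using Finset.strongInduction with
  | _ A ih =>
    intro hAs hAne hAret
    by_cases h : ∃ B : Finset V, B ⊆ s ∧ B ⊂ A ∧ B.Nonempty ∧ RetLike r s B
    · obtain ⟨B, hBs, hBA, hBne, hBret⟩ := h
      obtain ⟨A', h1, h2, h3, h4⟩ := ih B hBA hBs hBne hBret
      exact ⟨A', h1.trans hBA.subset, h2, h3, h4⟩
    · exact ⟨A, Finset.Subset.refl A, hAne, hAret,
        fun B hBs hBA hB => h ⟨B, hBs, hBA, hB.1, hB.2⟩⟩

lemma tau_nonempty (s : Finset V) (hs : s.Nonempty) : (tau r s).Nonempty := by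
  have hret : RetLike r s s := fun v hv _ _ =>
    (tau_subset r _).trans (Finset.coe_subset.mpr (inn_subset r s v))
  obtain ⟨A, hAs, hAne, hAret, hmin⟩ := exists_min r s s (Finset.Subset.refl s) hs hret
  obtain ⟨x, hx⟩ := hAne
  exact ⟨x, (mem_tau r).mpr ⟨A, hx, hAs, ⟨x, hx⟩, hAret, hmin⟩⟩

lemma condorcet_tau (a : V) : ∀ t : Finset V,
    (∀ u ∈ t, ∀ v ∈ t, r u v → ¬ r v u) → a ∈ t → (∀ w ∈ t, w ≠ a → r a w) →
    tau r t = {a} := by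
  intro t
  induction t using Finset.strongInduction with
  | _ t ih =>
    intro hasym hat hcw
    have hinn_a : inn r t a = ∅ := by
      rw [Finset.eq_empty_iff_forall_notMem]
      intro w hw
      obtain ⟨hwa, hwt, hrwa⟩ := (mem_inn r).mp hw
      exact hasym w hwt a hat hrwa (hcw w hwt hwa)
    have hsing : RetLike r t {a} := by
      intro v hv hvA hne
      rw [Finset.mem_singleton] at hvA; subst hvA
      rw [hinn_a] at hne
      exact absurd hne (by simp)
    ext x
    simp only [Set.mem_singleton_iff]
    constructor
    · intro hx
      obtain ⟨A, hxA, hAt, hAne, hAret, hmin⟩ := (mem_tau r).mp hx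
      by_cases haA : a ∈ A
      · have hsub : {a} ⊆ A := Finset.singleton_subset_iff.mpr haA
        have hnss : ¬({a} ⊂ A) := fun hss =>
          hmin {a} (Finset.singleton_subset_iff.mpr hat) hss
            ⟨Finset.singleton_nonempty a, hsing⟩
        have hA : A = {a} := by
          by_contra hne2
          exact hnss (hsub.ssubset_of_ne (fun h => hne2 h.symm))
        rw [hA, Finset.mem_singleton] at hxA
        exact hxA
      · exfalso
        have hxt : x ∈ t := hAt hxA
        have hxa : x ≠ a := fun h => haA (h ▸ hxA)
        have hax : r a x := hcw x hxt hxa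
        have hss : inn r t x ⊂ t := by
          refine Finset.ssubset_of_subset_of_ssubset ?_ (Finset.erase_ssubset hxt)
          intro w hw
          obtain ⟨h1, h2, h3⟩ := (mem_inn r).mp hw
          exact Finset.mem_erase.mpr ⟨h1, h2⟩
        have htau' : tau r (inn r t x) = {a} := by
          refine ih (inn r t x) hss ?_ ?_ ?_
          · intro u hu v hv
            exact hasym u (inn_subset r t x hu) v (inn_subset r t x hv)
          · exact (mem_inn r).mpr ⟨Ne.symm hxa, hat, hax⟩
          · intro w hw hwa
            exact hcw w (inn_subset r t x hw) hwa
        have hsub2 := hAret x hxt hxA ⟨a, (mem_inn r).mpr ⟨Ne.symm hxa, hat, hax⟩⟩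
        rw [htau'] at hsub2
        exact haA (Finset.mem_coe.mp (hsub2 rfl))
    · intro hx
      rw [hx]
      refine (mem_tau r).mpr ⟨({a} : Finset V), Finset.mem_singleton_self a,
        Finset.singleton_subset_iff.mpr hat, Finset.singleton_nonempty a, hsing, ?_⟩
      intro B hBs hBA hB
      rw [Finset.ssubset_singleton_iff] at hBA
      subst hBA
      exact Finset.not_nonempty_empty hB.1

end Aux

section Tour
variable [DecidableEq V] (r : V → V → Prop) [DecidableRel r] {s : Finset V}

lemma tour_asym (hT : IsTournament r s) : ∀ u ∈ s, ∀ v ∈ s, r u v → ¬ r v u := by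
  intro u hu v hv huv
  by_cases h : u = v
  · subst h; exact absurd huv (hT.1 u hu)
  · exact (hT.2 u hu v hv h).mp huv

lemma tour_total (hT : IsTournament r s) {u v : V} (hu : u ∈ s) (hv : v ∈ s)
    (huv : u ≠ v) (h : ¬ r v u) : r u v := (hT.2 u hu v hv huv).mpr h

lemma tau_inn_eq (hT : IsTournament r s) {u v : V} (hu : u ∈ s) (hv : v ∈ s)
    (huv : u ≠ v) (hruv : r u v) (hnd : ∀ w ∈ s, ¬ (r w u ∧ r w v)) :
    tau r (inn r s v) = {u} := by
  refine condorcet_tau r u (inn r s v) ?_ ((mem_inn r).mpr ⟨huv, hu, hruv⟩) ?_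
  · intro x hx y hy
    exact tour_asym r hT x (inn_subset r s v hx) y (inn_subset r s v hy)
  · intro w hw hwu
    obtain ⟨hwv, hws, hrwv⟩ := (mem_inn r).mp hw
    refine tour_total r hT hu hws (Ne.symm hwu) (fun hrwu => ?_)
    exact hnd w hws ⟨hrwu, hrwv⟩

lemma no_dom_pair (hT : IsTournament r s) {R : Finset V} (hRet : Retentive r s R)
    {x y w : V} (hx : x ∈ s) (hy : y ∈ s) (hw : w ∈ s) (hyR : y ∈ R)
    (hrxy : r x y) (honly : ∀ z ∈ R, r z y → z = x)
    (hwx : r w x) (hwy : r w y) : False := by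
  have hirr := hT.1
  have hwx' : w ≠ x := fun h => hirr x hx (h ▸ hwx)
  have hwy' : w ≠ y := fun h => hirr y hy (h ▸ hwy)
  have hxy : x ≠ y := fun h => hirr y hy (h ▸ hrxy)
  have hxt : x ∈ inn r s y := (mem_inn r).mpr ⟨hxy, hx, hrxy⟩
  have hwt : w ∈ inn r s y := (mem_inn r).mpr ⟨hwy', hw, hwy⟩
  have htau : tau r (inn r s y) ⊆ ↑R := hRet.2.2 y hyR ⟨x, hxt⟩
  have hsub : tau r (inn r s y) ⊆ {x} := by
    intro u hu
    obtain ⟨huy, hus, hruy⟩ := (mem_inn r).mp (tau_subset r _ hu)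
    exact honly u (htau hu) hruy
  obtain ⟨u, hu⟩ := tau_nonempty r (inn r s y) ⟨x, hxt⟩
  have hux : u = x := hsub hu
  rw [hux] at hu
  obtain ⟨A, hxA, hAt, hAne, hAret, hmin⟩ := (mem_tau r).mp hu
  have hA1 : ∀ z ∈ A, z = x := fun z hz =>
    hsub ((mem_tau r).mpr ⟨A, hz, hAt, hAne, hAret, hmin⟩)
  have hw2 : w ∈ inn r (inn r s y) x := (mem_inn r).mpr ⟨hwx', hwt, hwx⟩
  have h5 := hAret x (hAt hxA) hxA ⟨w, hw2⟩
  obtain ⟨u2, hu2⟩ := tau_nonempty r (inn r (inn r s y) x) ⟨w, hw2⟩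
  have hu2x : u2 ≠ x := ((mem_inn r).mp (tau_subset r _ hu2)).1
  exact hu2x (hA1 u2 (Finset.mem_coe.mp (h5 hu2)))

lemma cyclic_min (hT : IsTournament r s) {a b c : V}
    (ha : a ∈ s) (hb : b ∈ s) (hc : c ∈ s)
    (hab : a ≠ b) (hac : a ≠ c) (hbc : b ≠ c)
    (h1 : r a b) (h2 : r b c) (h3 : r c a)
    (hnd : ∀ w ∈ s, ∀ x ∈ ({a, b, c} : Finset V), ∀ y ∈ ({a, b, c} : Finset V),
      x ≠ y → ¬ (r w x ∧ r w y)) :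
    MinRetentive r s {a, b, c} := by
  have maR : a ∈ ({a, b, c} : Finset V) := by simp
  have mbR : b ∈ ({a, b, c} : Finset V) := by simp
  have mcR : c ∈ ({a, b, c} : Finset V) := by simp
  have tA : tau r (inn r s a) = {c} :=
    tau_inn_eq r hT hc ha (Ne.symm hac) h3
      (fun w hw hcon => hnd w hw c mcR a maR (Ne.symm hac) hcon)
  have tB : tau r (inn r s b) = {a} :=
    tau_inn_eq r hT ha hb hab h1
      (fun w hw hcon => hnd w hw a maR b mbR hab hcon)
  have tC : tau r (inn r s c) = {b} :=
    tau_inn_eq r hT hb hc hbc h2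
      (fun w hw hcon => hnd w hw b mbR c mcR hbc hcon)
  have hRsub : ({a, b, c} : Finset V) ⊆ s := by
    intro x hx
    simp only [Finset.mem_insert, Finset.mem_singleton] at hx
    rcases hx with h | h | h <;> subst h <;> assumption
  have hRet : Retentive r s {a, b, c} := by
    refine ⟨hRsub, ⟨a, maR⟩, ?_⟩
    intro v hv hne
    simp only [Finset.mem_insert, Finset.mem_singleton] at hv
    rcases hv with h | h | h <;> subst h
    · rw [tA]; intro z hz; rw [Set.mem_singleton_iff] at hz; subst hz
      exact Finset.mem_coe.mpr mcR
    · rw [tB]; intro z hz; rw [Set.mem_singleton_iff] at hz; subst hz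
      exact Finset.mem_coe.mpr maR
    · rw [tC]; intro z hz; rw [Set.mem_singleton_iff] at hz; subst hz
      exact Finset.mem_coe.mpr mbR
  refine ⟨hRet, ?_⟩
  intro B hBret hBsub
  obtain ⟨hBs, hBne, hBr⟩ := hBret
  have chain_b : b ∈ B → a ∈ B := by
    intro hbB
    have h := hBr b hbB ⟨a, (mem_inn r).mpr ⟨hab, ha, h1⟩⟩
    rw [tB] at h
    exact Finset.mem_coe.mp (h rfl)
  have chain_a : a ∈ B → c ∈ B := by
    intro haB
    have h := hBr a haB ⟨c, (mem_inn r).mpr ⟨Ne.symm hac, hc, h3⟩⟩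
    rw [tA] at h
    exact Finset.mem_coe.mp (h rfl)
  have chain_c : c ∈ B → b ∈ B := by
    intro hcB
    have h := hBr c hcB ⟨b, (mem_inn r).mpr ⟨hbc, hb, h2⟩⟩
    rw [tC] at h
    exact Finset.mem_coe.mp (h rfl)
  have hall : a ∈ B ∧ b ∈ B ∧ c ∈ B := by
    obtain ⟨v, hvB⟩ := hBne
    have hv3 := hBsub hvB
    simp only [Finset.mem_insert, Finset.mem_singleton] at hv3
    rcases hv3 with h | h | h <;> subst h
    · exact ⟨hvB, chain_c (chain_a hvB), chain_a hvB⟩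
    · exact ⟨chain_b hvB, hvB, chain_a (chain_b hvB)⟩
    · exact ⟨chain_b (chain_c hvB), chain_c hvB, hvB⟩
  refine Finset.Subset.antisymm hBsub ?_
  intro x hx
  simp only [Finset.mem_insert, Finset.mem_singleton] at hx
  rcases hx with h | h | h <;> subst h
  · exact hall.1
  · exact hall.2.1
  · exact hall.2.2

end Tour


theorem stmt8 [DecidableEq V] (r : V → V → Prop) [DecidableRel r] (s : Finset V)
    (hT : IsTournament r s) (a b c : V) (ha : a ∈ s) (hb : b ∈ s) (hc : c ∈ s)
    (hab : a ≠ b) (hac : a ≠ c) (hbc : b ≠ c) :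
    MinRetentive r s {a, b, c} ↔
      (((r a b ∧ r b c ∧ r c a) ∨ (r a c ∧ r c b ∧ r b a)) ∧
        ∀ w ∈ s, ∀ x ∈ ({a, b, c} : Finset V), ∀ y ∈ ({a, b, c} : Finset V),
          x ≠ y → ¬ (r w x ∧ r w y)) := by
  constructor
  · intro hM
    obtain ⟨hRet, hMin⟩ := hM
    have hRsub := hRet.1
    have asym := tour_asym r hT
    have step1 : ∀ v ∈ ({a, b, c} : Finset V), ∃ u ∈ ({a, b, c} : Finset V), r u v := by
      intro v hv
      have hvs := hRsub hv
      by_cases hne : (inn r s v).Nonempty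
      · obtain ⟨x, hx⟩ := tau_nonempty r _ hne
        have hxR := hRet.2.2 v hv hne hx
        obtain ⟨hxv, hxs, hrxv⟩ := (mem_inn r).mp (tau_subset r _ hx)
        exact ⟨x, Finset.mem_coe.mp hxR, hrxv⟩
      · exfalso
        have hret1 : Retentive r s {v} :=
          ⟨Finset.singleton_subset_iff.mpr hvs, Finset.singleton_nonempty v,
           fun u hu hune => by
             rw [Finset.mem_singleton] at hu; subst hu; exact absurd hune hne⟩
        have heq := hMin {v} hret1 (Finset.singleton_subset_iff.mpr hv)
        have h1 : a ∈ ({v} : Finset V) := by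
          rw [heq]; simp
        have h2 : b ∈ ({v} : Finset V) := by
          rw [heq]; simp
        rw [Finset.mem_singleton] at h1 h2
        exact hab (h1.trans h2.symm)
    obtain ⟨ua, huaR, hrua⟩ := step1 a (by simp)
    obtain ⟨ub, hubR, hrub⟩ := step1 b (by simp)
    obtain ⟨uc, hucR, hruc⟩ := step1 c (by simp)
    have hA : r b a ∨ r c a := by
      simp only [Finset.mem_insert, Finset.mem_singleton] at huaR
      rcases huaR with h | h | h
      · exact absurd (h ▸ hrua) (hT.1 a ha)
      · exact Or.inl (h ▸ hrua)
      · exact Or.inr (h ▸ hrua)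
    have hB : r a b ∨ r c b := by
      simp only [Finset.mem_insert, Finset.mem_singleton] at hubR
      rcases hubR with h | h | h
      · exact Or.inl (h ▸ hrub)
      · exact absurd (h ▸ hrub) (hT.1 b hb)
      · exact Or.inr (h ▸ hrub)
    have hC : r a c ∨ r b c := by
      simp only [Finset.mem_insert, Finset.mem_singleton] at hucR
      rcases hucR with h | h | h
      · exact Or.inl (h ▸ hruc)
      · exact Or.inr (h ▸ hruc)
      · exact absurd (h ▸ hruc) (hT.1 c hc)
    have htri : (r a b ∧ r b c ∧ r c a) ∨ (r a c ∧ r c b ∧ r b a) := by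
      rcases hA with hba | hca
      · have h1 : ¬ r a b := asym b hb a ha hba
        have hcb : r c b := hB.resolve_left h1
        have h2 : ¬ r b c := asym c hc b hb hcb
        have hac' : r a c := hC.resolve_right h2
        exact Or.inr ⟨hac', hcb, hba⟩
      · have h1 : ¬ r a c := asym c hc a ha hca
        have hbc' : r b c := hC.resolve_left h1
        have h2 : ¬ r c b := asym b hb c hc hbc'
        have hab' : r a b := hB.resolve_right h2
        exact Or.inl ⟨hab', hbc', hca⟩
    refine ⟨htri, ?_⟩
    intro w hws x hx y hy hxy hcon
    obtain ⟨hwx, hwy⟩ := hcon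
    have H : ∀ p q t : V, p ∈ s → q ∈ s → t ∈ s → ({p, q, t} : Finset V) = {a, b, c} →
        r p q → r q t → r t p → r w p → r w q → False := by
      intro p q t hp hq htm hset hpq hqt htp hwp hwq
      refine no_dom_pair r hT hRet hp hq hws ?_ hpq ?_ hwp hwq
      · rw [← hset]; simp
      · intro z hz hzq
        rw [← hset] at hz
        simp only [Finset.mem_insert, Finset.mem_singleton] at hz
        rcases hz with h | h | h
        · exact h
        · exact absurd (h ▸ hzq) (hT.1 q hq)
        · exact absurd (h ▸ hzq) (asym q hq t htm hqt)
    simp only [Finset.mem_insert, Finset.mem_singleton] at hx hy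
    have e1 : ({c, a, b} : Finset V) = {a, b, c} := by
      rw [Finset.insert_comm c a, Finset.pair_comm c b]
    have e3 : ({b, a, c} : Finset V) = {a, b, c} := Finset.insert_comm b a {c}
    have e2 : ({b, c, a} : Finset V) = {a, b, c} := by
      rw [Finset.pair_comm c a, e3]
    have e4 : ({a, c, b} : Finset V) = {a, b, c} := by rw [Finset.pair_comm c b]
    have e5 : ({c, b, a} : Finset V) = {a, b, c} := by rw [Finset.pair_comm b a, e1]
    rcases htri with ⟨t1, t2, t3⟩ | ⟨t1, t2, t3⟩
    · rcases hx with h | h | h <;> rcases hy with h' | h' | h'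
      · exact hxy (h.trans h'.symm)
      · exact H a b c ha hb hc rfl t1 t2 t3 (h ▸ hwx) (h' ▸ hwy)
      · exact H c a b hc ha hb e1 t3 t1 t2 (h' ▸ hwy) (h ▸ hwx)
      · exact H a b c ha hb hc rfl t1 t2 t3 (h' ▸ hwy) (h ▸ hwx)
      · exact hxy (h.trans h'.symm)
      · exact H b c a hb hc ha e2 t2 t3 t1 (h ▸ hwx) (h' ▸ hwy)
      · exact H c a b hc ha hb e1 t3 t1 t2 (h ▸ hwx) (h' ▸ hwy)
      · exact H b c a hb hc ha e2 t2 t3 t1 (h' ▸ hwy) (h ▸ hwx)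
      · exact hxy (h.trans h'.symm)
    · rcases hx with h | h | h <;> rcases hy with h' | h' | h'
      · exact hxy (h.trans h'.symm)
      · exact H b a c hb ha hc e3 t3 t1 t2 (h' ▸ hwy) (h ▸ hwx)
      · exact H a c b ha hc hb e4 t1 t2 t3 (h ▸ hwx) (h' ▸ hwy)
      · exact H b a c hb ha hc e3 t3 t1 t2 (h ▸ hwx) (h' ▸ hwy)
      · exact hxy (h.trans h'.symm)
      · exact H c b a hc hb ha e5 t2 t3 t1 (h' ▸ hwy) (h ▸ hwx)
      · exact H a c b ha hc hb e4 t1 t2 t3 (h' ▸ hwy) (h ▸ hwx)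
      · exact H c b a hc hb ha e5 t2 t3 t1 (h ▸ hwx) (h' ▸ hwy)
      · exact hxy (h.trans h'.symm)
  · rintro ⟨htri, hnd⟩
    rcases htri with ⟨t1, t2, t3⟩ | ⟨t1, t2, t3⟩
    · exact cyclic_min r hT ha hb hc hab hac hbc t1 t2 t3 hnd
    · have hset : ({a, c, b} : Finset V) = {a, b, c} := by rw [Finset.pair_comm c b]
      rw [← hset]
      refine cyclic_min r hT ha hc hb hac hab (Ne.symm hbc) t1 t2 t3 ?_
      intro w hw x hx y hy hxy
      rw [hset] at hx hy
      exact hnd w hw x hx y hy hxy
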